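/- Let K ⊆ ℝ^d be a convex body with 0 ∈ K ⊆ d²B, and let δ > 0 satisfy δd⁴ < 1. Then (1 − δd⁴)·K ⊆ Φ_δ(K) ⊆ K. -/
import Mathlib


open scoped Pointwise

/-- For `δ > 0`, `φ_δ(r) = 2 / (1 + √(1 + 4δr²))`, the unique positive root of
`φ + δr²φ² = 1`. -/
noncomputable def phi (δ r : ℝ) : ℝ := 2 / (1 + Real.sqrt (1 + 4 * δ * r ^ 2))

/-- The map `Φ_δ : ℝ^d → ℝ^d`, `Φ_δ(x) = φ_δ(|x|) • x`. -/
noncomputable def Phi (δ : ℝ) {d : ℕ} (x : EuclideanSpace ℝ (Fin d)) :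
    EuclideanSpace ℝ (Fin d) := phi δ ‖x‖ • x

lemma sqrt_ge_one {δ r : ℝ} (hδ : 0 ≤ δ) : 1 ≤ Real.sqrt (1 + 4 * δ * r ^ 2) := by
  have h : (1:ℝ) ≤ 1 + 4 * δ * r ^ 2 := by nlinarith [mul_nonneg hδ (sq_nonneg r)]
  calc (1:ℝ) = Real.sqrt 1 := by simp
    _ ≤ _ := Real.sqrt_le_sqrt h

lemma phi_pos {δ r : ℝ} (hδ : 0 ≤ δ) : 0 < phi δ r := by
  have := sqrt_ge_one (r := r) hδ
  unfold phi; positivity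

lemma phi_le_one {δ r : ℝ} (hδ : 0 ≤ δ) : phi δ r ≤ 1 := by
  have h := sqrt_ge_one (r := r) hδ
  unfold phi
  rw [div_le_one (by linarith)]
  linarith

lemma phi_ge {δ r : ℝ} (hδ : 0 ≤ δ) : 1 - δ * r ^ 2 ≤ phi δ r := by
  have h1 := sqrt_ge_one (r := r) hδ
  have harg : (0:ℝ) ≤ 1 + 4 * δ * r ^ 2 := by nlinarith [mul_nonneg hδ (sq_nonneg r)]
  have h2 : Real.sqrt (1 + 4 * δ * r ^ 2) ^ 2 = 1 + 4 * δ * r ^ 2 :=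
    Real.sq_sqrt harg
  set s := Real.sqrt (1 + 4 * δ * r ^ 2) with hs
  have ha : 0 ≤ δ * r ^ 2 := mul_nonneg hδ (sq_nonneg r)
  unfold phi
  rw [le_div_iff₀ (by linarith)]
  nlinarith [sq_nonneg (s - 1 - 2 * δ * r ^ 2)]

lemma phi_cont (δ c : ℝ) (hδ : 0 ≤ δ) :
    Continuous fun t : ℝ => t * phi δ (t * c) := by
  apply Continuous.mul continuous_id
  unfold phi
  apply Continuous.div continuous_const
  · continuity
  · intro t
    have := sqrt_ge_one (r := t * c) hδ
    linarith

/-- Let `K ⊆ ℝ^d` be a convex body with `0 ∈ K ⊆ d²B`, and `δ > 0` with `δd⁴ < 1`.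
Then `(1 - δd⁴)·K ⊆ Φ_δ(K) ⊆ K`. -/
theorem stmt8 (d : ℕ) (δ : ℝ) (K : Set (EuclideanSpace ℝ (Fin d)))
    (hKcomp : IsCompact K) (hKconv : Convex ℝ K) (hKint : (interior K).Nonempty)
    (h0 : (0 : EuclideanSpace ℝ (Fin d)) ∈ K)
    (hKB : K ⊆ Metric.closedBall 0 ((d : ℝ) ^ 2))
    (hδ : 0 < δ) (hδ2 : δ * (d : ℝ) ^ 4 < 1) :
    (1 - δ * (d : ℝ) ^ 4) • K ⊆ Phi δ '' K ∧ Phi δ '' K ⊆ K := by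
  constructor
  · intro y hy
    rw [Set.mem_smul_set] at hy
    obtain ⟨x, hx, rfl⟩ := hy
    have hxn : ‖x‖ ≤ (d : ℝ) ^ 2 := by
      simpa [dist_zero_right] using hKB hx
    have hx2 : ‖x‖ ^ 2 ≤ ((d : ℝ) ^ 2) ^ 2 := pow_le_pow_left₀ (norm_nonneg x) hxn 2
    have hc0 : (0:ℝ) ≤ 1 - δ * (d:ℝ)^4 := by linarith
    have hc1 : 1 - δ * (d:ℝ)^4 ≤ 1 * phi δ (1 * ‖x‖) := by
      rw [one_mul, one_mul]
      calc 1 - δ * (d:ℝ)^4 ≤ 1 - δ * ‖x‖^2 := by nlinarith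
        _ ≤ phi δ ‖x‖ := phi_ge hδ.le
    have key : (1 - δ*(d:ℝ)^4) ∈
        Set.Icc ((fun t : ℝ => t * phi δ (t * ‖x‖)) 0)
          ((fun t : ℝ => t * phi δ (t * ‖x‖)) 1) := by
      constructor
      · simpa using hc0
      · simpa using hc1
    obtain ⟨t, ht, hft⟩ := intermediate_value_Icc (by norm_num : (0:ℝ) ≤ 1)
      ((phi_cont δ ‖x‖ hδ.le).continuousOn) key
    simp only at hft
    refine ⟨t • x, hKconv.smul_mem_of_zero_mem h0 hx ht, ?_⟩
    have htn : ‖t • x‖ = t * ‖x‖ := by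
      rw [norm_smul, Real.norm_of_nonneg ht.1]
    rw [Phi, htn, smul_smul, mul_comm (phi δ (t * ‖x‖)) t, hft]
  · rintro y ⟨x, hx, rfl⟩
    rw [Phi]
    exact hKconv.smul_mem_of_zero_mem h0 hx ⟨(phi_pos hδ.le).le, phi_le_one hδ.le⟩
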